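/- If d is an N×N symmetric matrix with zero diagonal representing a metric of strict negative type (i.e., x^T d x < 0 for all nonzero x with 1^T x = 0), N ≥ 2, and the all-ones vector 1 is an eigenvector of d, then d^{-1} is also of strict negative type: for all nonzero x with 1^T x = 0, x^T d^{-1} x < 0. -/

import Mathlib

open Matrix BigOperators

/-- If `d` is an `N×N` symmetric matrix with zero diagonal representing a metric of strict
negative type, `N ≥ 2`, and the all-ones vector is an eigenvector of `d`, then `d⁻¹` is also
of strict negative type. -/
theorem stmt0 {N : ℕ} (hN : 2 ≤ N) (d : Matrix (Fin N) (Fin N) ℝ)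
    (hsymm : d.IsSymm) (hdiag : ∀ i, d i i = 0)
    (hpos : ∀ i j, i ≠ j → 0 < d i j)
    (htri : ∀ i j k, d i k ≤ d i j + d j k)
    (hSNT : ∀ x : Fin N → ℝ, x ≠ 0 → ∑ i, x i = 0 → x ⬝ᵥ d.mulVec x < 0)
    (hev : ∃ lam : ℝ, d.mulVec 1 = lam • (1 : Fin N → ℝ)) :
    ∀ x : Fin N → ℝ, x ≠ 0 → ∑ i, x i = 0 → x ⬝ᵥ d⁻¹.mulVec x < 0 := by
  obtain ⟨lam, hlam⟩ := hev
  -- lam > 0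
  have hlam0 : 0 < lam := by
    have h := congrFun hlam ⟨0, by omega⟩
    simp only [Matrix.mulVec, dotProduct, Pi.one_apply, mul_one, Pi.smul_apply,
      smul_eq_mul] at h
    rw [← h]
    apply Finset.sum_pos'
    · intro j _
      rcases eq_or_ne (⟨0, by omega⟩ : Fin N) j with rfl | hne
      · simp [hdiag]
      · exact (hpos _ _ hne).le
    · exact ⟨⟨1, by omega⟩, Finset.mem_univ _, hpos _ _ (by simp [Fin.ext_iff])⟩
  -- key: 1ᵀ d v = lam * sum v
  have key : ∀ v : Fin N → ℝ, (1 : Fin N → ℝ) ⬝ᵥ d.mulVec v = lam * ∑ i, v i := by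
    intro v
    rw [Matrix.dotProduct_mulVec, ← Matrix.mulVec_transpose, hsymm.eq, hlam]
    simp [dotProduct, Finset.mul_sum]
  -- d is invertible
  have hdet : IsUnit d.det := by
    rw [isUnit_iff_ne_zero]
    refine Matrix.nondegenerate_iff_det_ne_zero.mp (Matrix.nondegenerate_iff_separatingLeft.mpr ?_)
    intro v hv
    by_contra hv0
    have hsum : ∑ i, v i = 0 := by
      have h1 : v ⬝ᵥ d *ᵥ (1 : Fin N → ℝ) = 0 := by convert hv 1 using 3 <;> rfl
      rw [hlam] at h1
      simp only [dotProduct_smul, smul_eq_mul, dotProduct_one] at h1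
      rcases mul_eq_zero.mp h1 with h | h
      · exact absurd h hlam0.ne'
      · exact h
    exact absurd (show v ⬝ᵥ d *ᵥ v = 0 by convert hv v using 3 <;> rfl) (hSNT v hv0 hsum).ne
  intro x hx hsum
  set y := d⁻¹ *ᵥ x with hy
  have hxy : d *ᵥ y = x := by
    rw [hy, Matrix.mulVec_mulVec, Matrix.mul_nonsing_inv d hdet, Matrix.one_mulVec]
  have hysum : ∑ i, y i = 0 := by
    have hk := key y
    rw [hxy] at hk
    have h1 : (1 : Fin N → ℝ) ⬝ᵥ x = 0 := by
      simp [one_dotProduct, hsum]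
    rw [h1] at hk
    rcases mul_eq_zero.mp hk.symm with h | h
    · exact absurd h hlam0.ne'
    · exact h
  have hy0 : y ≠ 0 := by
    intro h
    apply hx
    rw [← hxy, h, Matrix.mulVec_zero]
  show x ⬝ᵥ y < 0
  rw [← hxy, dotProduct_comm]
  exact hSNT y hy0 hysum
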